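/- For a simple matroid M, the number of facets of the no broken circuit complex equals (−1)^{r+1} χ_M(0), i.e., the absolute value of the constant term of the characteristic polynomial. -/

import Mathlib

open Set
open scoped Classical

/-- A circuit of a matroid: a minimal dependent set. -/
def Matroid.IsCircuit' {α : Type*} (M : Matroid α) (C : Set α) : Prop :=
  M.Dep C ∧ ∀ D ⊂ C, M.Indep D

/-- A broken circuit: a circuit with its least element (in the natural order) removed. -/
def Matroid.IsBrokenCircuit {n : ℕ} (M : Matroid (Fin (n + 1))) (B : Set (Fin (n + 1))) : Prop :=
  ∃ C m, M.IsCircuit' C ∧ m ∈ C ∧ (∀ k ∈ C, m ≤ k) ∧ B = C \ {m}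

/-- The rank of a set in a matroid: the largest size of an independent subset. -/
noncomputable def Matroid.rk' {α : Type*} (M : Matroid α) (S : Set α) : ℕ :=
  sSup {k | ∃ I, I ⊆ S ∧ M.Indep I ∧ I.ncard = k}

section Aux

variable {n : ℕ} {M : Matroid (Fin (n + 1))}

private lemma subE (hE : M.E = Set.univ) (S : Set (Fin (n + 1))) : S ⊆ M.E := by
  rw [hE]; exact Set.subset_univ _

/-- Every dependent set contains a circuit. -/
private lemma exists_circuit_subset (hE : M.E = Set.univ) :
    ∀ (k : ℕ) (D : Set (Fin (n + 1))), D.ncard ≤ k → M.Dep D →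
      ∃ C, C ⊆ D ∧ M.IsCircuit' C := by
  intro k
  induction k with
  | zero =>
    intro D hcard hD
    rw [Nat.le_zero, Set.ncard_eq_zero (Set.toFinite D)] at hcard
    subst hcard
    exact absurd hD M.empty_indep.not_dep
  | succ k ih =>
    intro D hcard hD
    by_cases h : ∀ D' ⊂ D, M.Indep D'
    · exact ⟨D, subset_rfl, hD, h⟩
    · push_neg at h
      obtain ⟨D', hss, hni⟩ := h
      have hdep : M.Dep D' := ⟨hni, subE hE _⟩
      have hlt : D'.ncard < D.ncard := Set.ncard_lt_ncard hss (Set.toFinite D)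
      obtain ⟨C, hC1, hC2⟩ := ih D' (by omega) hdep
      exact ⟨C, hC1.trans hss.subset, hC2⟩

private lemma circuit_mem_closure_diff {C : Set (Fin (n + 1))} {x : Fin (n + 1)}
    (hC : M.IsCircuit' C) (hx : x ∈ C) : x ∈ M.closure (C \ {x}) := by
  have hI : M.Indep (C \ {x}) := hC.2 _ (Set.sdiff_singleton_ssubset.mpr hx)
  rw [hI.mem_closure_iff]
  left
  have h2 : insert x (C \ {x}) = C := by
    rw [Set.insert_diff_singleton, Set.insert_eq_of_mem hx]
  rw [h2]
  exact hC.1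

/-- An NBC set is independent. -/
private lemma indep_of_nbc (hE : M.E = Set.univ) {S : Set (Fin (n + 1))}
    (h : ∀ B, M.IsBrokenCircuit B → ¬ B ⊆ S) : M.Indep S := by
  by_contra hni
  obtain ⟨C, hCS, hC⟩ := exists_circuit_subset hE S.ncard S le_rfl ⟨hni, subE hE _⟩
  have hne : C.Nonempty := by
    rcases Set.eq_empty_or_nonempty C with h0 | h0
    · exact absurd (h0 ▸ hC.1) M.empty_indep.not_dep
    · exact h0
  obtain ⟨m, hmC, hmin⟩ := Set.exists_min_image C id (Set.toFinite C) hne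
  exact h (C \ {m}) ⟨C, m, hC, hmC, hmin, rfl⟩ ((Set.diff_subset).trans hCS)

/-- If `x` is in the closure of an independent set not containing it, there is a circuit
through `x` inside `insert x X`. -/
private lemma exists_circuit_of_mem_closure (hE : M.E = Set.univ) {X : Set (Fin (n + 1))}
    {x : Fin (n + 1)} (hX : M.Indep X) (hx : x ∈ M.closure X) (hxX : x ∉ X) :
    ∃ C, C ⊆ insert x X ∧ M.IsCircuit' C ∧ x ∈ C := by
  have hdep : M.Dep (insert x X) := hX.insert_dep_iff.mpr ⟨hx, hxX⟩
  obtain ⟨C, hCs, hC⟩ := exists_circuit_subset hE (insert x X).ncard (insert x X) le_rfl hdep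
  refine ⟨C, hCs, hC, ?_⟩
  by_contra hxC
  refine hC.1.not_indep (hX.subset fun y hy => ?_)
  rcases Set.mem_insert_iff.mp (hCs hy) with rfl | hyX
  · exact absurd hy hxC
  · exact hyX

end Aux
section Inv

variable {n : ℕ}

/-- The set of elements of `S` above `e`. -/
private def US {n : ℕ} (S : Finset (Fin (n + 1))) (e : Fin (n + 1)) : Set (Fin (n + 1)) :=
  {f | f ∈ S ∧ e < f}

/-- The set of "toggleable" elements. -/
private noncomputable def Aset {n : ℕ} (M : Matroid (Fin (n + 1)))
    (S : Finset (Fin (n + 1))) : Finset (Fin (n + 1)) :=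
  Finset.univ.filter (fun e => e ∈ M.closure (US S e))

private noncomputable def toggle {n : ℕ} (S : Finset (Fin (n + 1))) (e : Fin (n + 1)) :
    Finset (Fin (n + 1)) :=
  if e ∈ S then S.erase e else insert e S

variable {M : Matroid (Fin (n + 1))} {S : Finset (Fin (n + 1))} {e0 : Fin (n + 1)}

private lemma US_subset_diff (S : Finset (Fin (n + 1))) (e : Fin (n + 1)) :
    US S e ⊆ (S : Set (Fin (n + 1))) \ {e} :=
  fun f hf => ⟨hf.1, fun h => absurd ((Set.mem_singleton_iff.mp h) ▸ hf.2) (lt_irrefl _)⟩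

private lemma US_mono {S : Finset (Fin (n + 1))} {g e : Fin (n + 1)} (h : g ≤ e) :
    US S e ⊆ US S g := fun f hf => ⟨hf.1, lt_of_le_of_lt h hf.2⟩

private lemma closure_US_toggle (he0 : e0 ∈ M.closure (US S e0)) (g : Fin (n + 1)) :
    M.closure (US (toggle S e0) g) = M.closure (US S g) := by
  by_cases hg : g < e0
  · by_cases hmem : e0 ∈ S
    · have hset : US (toggle S e0) g = US S g \ {e0} := by
        ext f
        simp only [US, toggle, if_pos hmem, Set.mem_setOf_eq, Finset.mem_erase, Set.mem_diff,
          Set.mem_singleton_iff]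
        tauto
      have hsub2 : US S e0 ⊆ US S g \ {e0} := fun f hf =>
        ⟨⟨hf.1, lt_trans hg hf.2⟩, fun h => absurd ((Set.mem_singleton_iff.mp h) ▸ hf.2)
          (lt_irrefl _)⟩
      rw [hset]
      exact Matroid.closure_diff_singleton_eq_closure (M.closure_subset_closure hsub2 he0)
    · have hset : US (toggle S e0) g = insert e0 (US S g) := by
        ext f
        simp only [US, toggle, if_neg hmem, Set.mem_setOf_eq, Finset.mem_insert, Set.mem_insert_iff]
        constructor
        · rintro ⟨rfl | hf, hgf⟩
          · exact Or.inl rfl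
          · exact Or.inr ⟨hf, hgf⟩
        · rintro (rfl | ⟨hf, hgf⟩)
          · exact ⟨Or.inl rfl, hg⟩
          · exact ⟨Or.inr hf, hgf⟩
      rw [hset]
      exact Matroid.closure_insert_eq_of_mem_closure
        (M.closure_subset_closure (US_mono hg.le) he0)
  · have hset : US (toggle S e0) g = US S g := by
      push_neg at hg
      ext f
      have hne : ∀ (hf : g < f), f ≠ e0 := fun hf h => absurd (h ▸ hf) (by
        intro hh; exact absurd (lt_of_le_of_lt hg hh) (lt_irrefl _))
      simp only [US, toggle, Set.mem_setOf_eq]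
      by_cases hmem : e0 ∈ S
      · simp only [if_pos hmem, Finset.mem_erase]
        constructor
        · rintro ⟨⟨_, hf⟩, hgf⟩; exact ⟨hf, hgf⟩
        · rintro ⟨hf, hgf⟩; exact ⟨⟨hne hgf, hf⟩, hgf⟩
      · simp only [if_neg hmem, Finset.mem_insert]
        constructor
        · rintro ⟨rfl | hf, hgf⟩
          · exact absurd rfl (hne hgf)
          · exact ⟨hf, hgf⟩
        · rintro ⟨hf, hgf⟩; exact ⟨Or.inr hf, hgf⟩
    rw [hset]

private lemma Aset_toggle (he0 : e0 ∈ M.closure (US S e0)) :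
    Aset M (toggle S e0) = Aset M S := by
  ext e
  simp only [Aset, Finset.mem_filter, Finset.mem_univ, true_and]
  rw [closure_US_toggle he0 e]

private lemma toggle_toggle (S : Finset (Fin (n + 1))) (e : Fin (n + 1)) :
    toggle (toggle S e) e = S := by
  by_cases h : e ∈ S
  · have h1 : toggle S e = S.erase e := by rw [toggle, if_pos h]
    rw [h1, toggle, if_neg (Finset.notMem_erase e S)]
    exact Finset.insert_erase h
  · have h1 : toggle S e = insert e S := by rw [toggle, if_neg h]
    rw [h1, toggle, if_pos (Finset.mem_insert_self e S)]
    exact Finset.erase_insert h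

private lemma closure_toggle (he0 : e0 ∈ M.closure (US S e0)) :
    M.closure (toggle S e0 : Set (Fin (n + 1))) = M.closure (S : Set (Fin (n + 1))) := by
  by_cases hmem : e0 ∈ S
  · rw [toggle, if_pos hmem, Finset.coe_erase]
    exact Matroid.closure_diff_singleton_eq_closure
      (M.closure_subset_closure (US_subset_diff S e0) he0)
  · rw [toggle, if_neg hmem, Finset.coe_insert]
    exact Matroid.closure_insert_eq_of_mem_closure
      (M.closure_subset_closure (fun f hf => hf.1) he0)

private lemma toggle_ne (S : Finset (Fin (n + 1))) (e : Fin (n + 1)) : toggle S e ≠ S := by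
  by_cases h : e ∈ S
  · have h1 : toggle S e = S.erase e := by rw [toggle, if_pos h]
    rw [h1]
    intro heq
    exact (Finset.notMem_erase e S) (heq.symm ▸ h)
  · have h1 : toggle S e = insert e S := by rw [toggle, if_neg h]
    rw [h1]
    intro heq
    exact h (heq ▸ Finset.mem_insert_self e S)

private lemma neg_one_pow_toggle (S : Finset (Fin (n + 1))) (e : Fin (n + 1)) :
    (-1 : ℚ) ^ (toggle S e).card = -(-1 : ℚ) ^ S.card := by
  by_cases h : e ∈ S
  · rw [toggle, if_pos h]
    have : S.card = (S.erase e).card + 1 := by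
      rw [Finset.card_erase_of_mem h]
      have := Finset.card_pos.mpr ⟨e, h⟩
      omega
    rw [this, pow_succ]
    ring
  · rw [toggle, if_neg h, Finset.card_insert_of_notMem h, pow_succ]
    ring

end Inv
/-- The characteristic polynomial of a matroid of rank `r+1` on `{0,…,n}`,
via the Whitney subset expansion `χ_M(q) = Σ_{S ⊆ E} (-1)^{|S|} q^{r+1-rk(S)}`. -/
noncomputable def charPoly {n : ℕ} (M : Matroid (Fin (n + 1))) (r : ℕ) : Polynomial ℚ :=
  ∑ S ∈ (Finset.univ : Finset (Fin (n + 1))).powerset,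
    (-1 : Polynomial ℚ) ^ S.card * Polynomial.X ^ (r + 1 - M.rk' (S : Set (Fin (n + 1))))

/-- for a simple matroid of rank `r+1`, the number of facets of the no broken
circuit complex equals `(−1)^{r+1} χ_M(0)`. -/
theorem NBC_facet_count {n r : ℕ} (M : Matroid (Fin (n + 1)))
    (hE : M.E = Set.univ)
    (hsimple : ∀ e f : Fin (n + 1), e ≠ f → M.Indep {e, f})
    (hloopless : ∀ e : Fin (n + 1), M.Indep {e})
    (hrank : ∀ B : Set (Fin (n + 1)), M.IsBase B → B.ncard = r + 1) :
    ((Finset.univ.filter (fun S : Finset (Fin (n + 1)) =>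
        (∀ B, M.IsBrokenCircuit B → ¬ B ⊆ (S : Set (Fin (n + 1)))) ∧
        ∀ T : Finset (Fin (n + 1)),
          (∀ B, M.IsBrokenCircuit B → ¬ B ⊆ (T : Set (Fin (n + 1)))) → S ⊆ T → S = T)).card : ℚ)
      = (-1) ^ (r + 1) * (charPoly M r).eval 0 := by
  classical
  have hsub : ∀ X : Set (Fin (n + 1)), X ⊆ M.E := fun X => by
    rw [hE]; exact Set.subset_univ _
  -- every size of an independent set is at most r+1
  have hbdd : ∀ (S : Set (Fin (n + 1))) (k : ℕ),
      (∃ I, I ⊆ S ∧ M.Indep I ∧ I.ncard = k) → k ≤ r + 1 := by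
    rintro S k ⟨I, hIS, hI, rfl⟩
    obtain ⟨B, hB, hIB⟩ := hI.exists_isBase_superset
    have h1 := Set.ncard_le_ncard hIB (Set.toFinite B)
    rwa [hrank B hB] at h1
  -- rank characterization of spanning
  have hrk : ∀ S : Finset (Fin (n + 1)),
      (r + 1 - M.rk' (S : Set (Fin (n + 1))) = 0 ↔ M.Spanning (S : Set (Fin (n + 1)))) := by
    intro S
    rw [Nat.sub_eq_zero_iff_le]
    have hKne : {k | ∃ I, I ⊆ (S : Set (Fin (n + 1))) ∧ M.Indep I ∧ I.ncard = k}.Nonempty :=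
      ⟨0, ∅, Set.empty_subset _, M.empty_indep, Set.ncard_empty _⟩
    have hKbdd : BddAbove {k | ∃ I, I ⊆ (S : Set (Fin (n + 1))) ∧ M.Indep I ∧ I.ncard = k} :=
      ⟨r + 1, fun k hk => hbdd _ k hk⟩
    constructor
    · intro hle
      rw [Matroid.rk'] at hle
      have hmem := Nat.sSup_mem hKne hKbdd
      obtain ⟨I, hIS, hI, hIcard⟩ := hmem
      have h1 : I.ncard = r + 1 :=
        le_antisymm (hbdd _ _ ⟨I, hIS, hI, rfl⟩) (by rw [hIcard]; exact hle)
      obtain ⟨B, hB, hIB⟩ := hI.exists_isBase_superset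
      have h2 : I = B := Set.eq_of_subset_of_ncard_le hIB
        (by rw [hrank B hB, h1]) (Set.toFinite B)
      exact (M.spanning_iff_exists_isBase_subset (hsub _)).mpr ⟨B, hB, h2 ▸ hIS⟩
    · intro hsp
      obtain ⟨B, hB, hBS⟩ := hsp.exists_isBase_subset
      have h1 : r + 1 ∈ {k | ∃ I, I ⊆ (S : Set (Fin (n + 1))) ∧ M.Indep I ∧ I.ncard = k} :=
        ⟨B, hBS, hB.indep, hrank B hB⟩
      exact le_csSup hKbdd h1
  -- min of Aset is toggleable
  have hminA : ∀ (S : Finset (Fin (n + 1))) (h : (Aset M S).Nonempty),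
      ((Aset M S).min' h) ∈ M.closure (US S ((Aset M S).min' h)) := by
    intro S h
    have h1 := (Aset M S).min'_mem h
    exact (Finset.mem_filter.mp h1).2
  -- empty Aset implies NBC
  have hA_nbc : ∀ S : Finset (Fin (n + 1)), Aset M S = ∅ →
      ∀ B, M.IsBrokenCircuit B → ¬ B ⊆ (S : Set (Fin (n + 1))) := by
    rintro S hA B ⟨C, m, hC, hmC, hmin, rfl⟩ hBS
    have h1 : C \ {m} ⊆ US S m := by
      rintro f ⟨hfC, hfm⟩
      exact ⟨Finset.mem_coe.mp (hBS ⟨hfC, hfm⟩),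
        lt_of_le_of_ne (hmin f hfC) (fun h => hfm (Set.mem_singleton_iff.mpr h.symm))⟩
    have h2 : m ∈ M.closure (US S m) :=
      M.closure_subset_closure h1 (circuit_mem_closure_diff hC hmC)
    have h3 : m ∈ Aset M S := Finset.mem_filter.mpr ⟨Finset.mem_univ m, h2⟩
    rw [hA] at h3
    exact absurd h3 (Finset.notMem_empty m)
  -- the key equivalence : NBC-facet ↔ spanning with empty Aset
  have hequiv : ∀ S : Finset (Fin (n + 1)),
      ((∀ B, M.IsBrokenCircuit B → ¬ B ⊆ (S : Set (Fin (n + 1)))) ∧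
        ∀ T : Finset (Fin (n + 1)),
          (∀ B, M.IsBrokenCircuit B → ¬ B ⊆ (T : Set (Fin (n + 1)))) → S ⊆ T → S = T) ↔
      (M.Spanning (S : Set (Fin (n + 1))) ∧ Aset M S = ∅) := by
    intro S
    constructor
    · rintro ⟨hNBC, hmax⟩
      have hSind : M.Indep (S : Set (Fin (n + 1))) := indep_of_nbc hE hNBC
      have hspan : M.Spanning (S : Set (Fin (n + 1))) := by
        by_contra hns
        have hclne : M.closure (S : Set (Fin (n + 1))) ≠ M.E := fun h =>
          hns ((M.spanning_iff_closure_eq (hsub _)).mpr h)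
        have hss : M.closure (S : Set (Fin (n + 1))) ⊂ M.E :=
          (M.closure_subset_ground _).ssubset_of_ne hclne
        obtain ⟨e₁, he₁E, he₁nc⟩ := Set.exists_of_ssubset hss
        obtain ⟨e, ⟨heE, henc⟩, hminE⟩ := Set.exists_min_image
          (M.E \ M.closure (S : Set (Fin (n + 1)))) id (Set.toFinite _) ⟨e₁, he₁E, he₁nc⟩
        have heS : e ∉ S := fun h =>
          henc (M.subset_closure _ (hsub _) (Finset.mem_coe.mpr h))
        have hTnbc : ∀ B, M.IsBrokenCircuit B → ¬ B ⊆ ((insert e S : Finset _) : Set (Fin (n + 1))) := by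
          rintro B ⟨C, m, hC, hmC, hminC, rfl⟩ hBT
          rw [Finset.coe_insert] at hBT
          by_cases heB : e ∈ C \ {m}
          · have hme : m < e := lt_of_le_of_ne (hminC e heB.1)
              (fun h => heB.2 (Set.mem_singleton_iff.mpr h.symm))
            have h1 : e ∈ M.closure (C \ {e}) := circuit_mem_closure_diff hC heB.1
            have h2 : C \ {e} ⊆ insert m (S : Set (Fin (n + 1))) := by
              rintro f ⟨hfC, hfe⟩
              by_cases hfm : f = m
              · exact Set.mem_insert_iff.mpr (Or.inl hfm)
              · have hf' : f ∈ C \ {m} := ⟨hfC, fun h => hfm (Set.mem_singleton_iff.mp h)⟩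
                rcases Set.mem_insert_iff.mp (hBT hf') with h | h
                · exact absurd (Set.mem_singleton_iff.mpr h) hfe
                · exact Set.mem_insert_iff.mpr (Or.inr h)
            have h3 : e ∈ M.closure (insert m (S : Set (Fin (n + 1)))) :=
              M.closure_subset_closure h2 h1
            by_cases hm : m ∈ M.closure (S : Set (Fin (n + 1)))
            · rw [Matroid.closure_insert_eq_of_mem_closure hm] at h3
              exact henc h3
            · have hmW : m ∈ M.E \ M.closure (S : Set (Fin (n + 1))) :=
                ⟨by rw [hE]; exact Set.mem_univ m, hm⟩
              exact absurd (hminE m hmW) (not_le.mpr hme)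
          · refine hNBC _ ⟨C, m, hC, hmC, hminC, rfl⟩ (fun f hf => ?_)
            rcases Set.mem_insert_iff.mp (hBT hf) with h | h
            · exact absurd (h ▸ hf) heB
            · exact h
        have h4 := hmax (insert e S) hTnbc (Finset.subset_insert e S)
        exact heS (by rw [h4]; exact Finset.mem_insert_self e S)
      refine ⟨hspan, ?_⟩
      by_contra hA
      obtain ⟨e, he⟩ := Finset.nonempty_iff_ne_empty.mpr hA
      have he' : e ∈ M.closure (US S e) := (Finset.mem_filter.mp he).2
      have hUSind : M.Indep (US S e) := hSind.subset (fun f hf => hf.1)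
      by_cases heS : e ∈ S
      · have h1 : M.closure (US S e) ⊆ M.closure ((S : Set (Fin (n + 1))) \ {e}) :=
          M.closure_subset_closure (US_subset_diff S e)
        exact hSind.notMem_closure_diff_of_mem (Finset.mem_coe.mpr heS) (h1 he')
      · have heUS : e ∉ US S e := fun h => lt_irrefl e h.2
        obtain ⟨C, hCsub, hC, heC⟩ := exists_circuit_of_mem_closure hE hUSind he' heUS
        have hminC : ∀ k ∈ C, e ≤ k := by
          intro k hk
          rcases Set.mem_insert_iff.mp (hCsub hk) with rfl | h
          · exact le_rfl
          · exact (h.2).le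
        refine hNBC (C \ {e}) ⟨C, e, hC, heC, hminC, rfl⟩ ?_
        rintro f ⟨hfC, hfe⟩
        rcases Set.mem_insert_iff.mp (hCsub hfC) with h | h
        · exact absurd (Set.mem_singleton_iff.mpr h) hfe
        · exact Finset.mem_coe.mpr h.1
    · rintro ⟨hspan, hA⟩
      have hNBC := hA_nbc S hA
      have hSind : M.Indep (S : Set (Fin (n + 1))) := indep_of_nbc hE hNBC
      have hbase : M.IsBase (S : Set (Fin (n + 1))) := hspan.isBase_of_indep hSind
      refine ⟨hNBC, fun T hTnbc hST => ?_⟩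
      have hTind : M.Indep (T : Set (Fin (n + 1))) := indep_of_nbc hE hTnbc
      exact Finset.coe_injective (hbase.eq_of_subset_indep hTind (Finset.coe_subset.mpr hST))
  -- evaluate the characteristic polynomial at 0
  have heval : (charPoly M r).eval 0
      = ∑ S ∈ Finset.univ.filter (fun S : Finset (Fin (n + 1)) =>
          M.Spanning (S : Set (Fin (n + 1)))), (-1 : ℚ) ^ S.card := by
    rw [charPoly, Polynomial.eval_finset_sum, Finset.sum_filter]
    rw [← Finset.powerset_univ]
    refine Finset.sum_congr rfl fun S _ => ?_
    rw [Polynomial.eval_mul, Polynomial.eval_pow, Polynomial.eval_pow, Polynomial.eval_neg,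
      Polynomial.eval_one, Polynomial.eval_X, zero_pow_eq, mul_ite, mul_one, mul_zero,
      if_congr (hrk S) rfl rfl]
  -- the sum over non-fixed spanning sets vanishes by the involution
  have hzero : ∑ S ∈ (Finset.univ.filter (fun S : Finset (Fin (n + 1)) =>
      M.Spanning (S : Set (Fin (n + 1))))).filter (fun S => ¬ Aset M S = ∅),
      (-1 : ℚ) ^ S.card = 0 := by
    refine Finset.sum_involution
      (fun S hS => toggle S ((Aset M S).min'
        (Finset.nonempty_iff_ne_empty.mpr (Finset.mem_filter.mp hS).2)))
      (fun S hS => ?_) (fun S hS _ => ?_) (fun S hS => ?_) (fun S hS => ?_)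
    · rw [neg_one_pow_toggle]; ring
    · exact toggle_ne S _
    · -- membership is preserved
      obtain ⟨hS1, hS2⟩ := Finset.mem_filter.mp hS
      have hsp := Finset.mem_filter.mp hS1
      set hne := Finset.nonempty_iff_ne_empty.mpr hS2
      have hkey := hminA S hne
      refine Finset.mem_filter.mpr ⟨Finset.mem_filter.mpr ⟨Finset.mem_univ _, ?_⟩, ?_⟩
      · rw [M.spanning_iff_closure_eq (hsub _), closure_toggle hkey]
        exact hsp.2.closure_eq
      · rw [Aset_toggle hkey]
        exact hS2
    · -- involution
      obtain ⟨hS1, hS2⟩ := Finset.mem_filter.mp hS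
      set hne := Finset.nonempty_iff_ne_empty.mpr hS2
      have hkey := hminA S hne
      have hAeq : Aset M (toggle S ((Aset M S).min' hne)) = Aset M S := Aset_toggle hkey
      simp only [hAeq]
      exact toggle_toggle S _
  -- the sum over fixed spanning sets counts NBC facets
  have hfix : ∑ S ∈ (Finset.univ.filter (fun S : Finset (Fin (n + 1)) =>
      M.Spanning (S : Set (Fin (n + 1))))).filter (fun S => Aset M S = ∅),
      (-1 : ℚ) ^ S.card
      = ((Finset.univ.filter (fun S : Finset (Fin (n + 1)) =>
          M.Spanning (S : Set (Fin (n + 1))))).filter (fun S => Aset M S = ∅)).card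
        * (-1 : ℚ) ^ (r + 1) := by
    rw [Finset.sum_congr rfl (fun S hS => ?_), Finset.sum_const, nsmul_eq_mul]
    obtain ⟨hS1, hS2⟩ := Finset.mem_filter.mp hS
    have hsp := (Finset.mem_filter.mp hS1).2
    have hSind : M.Indep (S : Set (Fin (n + 1))) := indep_of_nbc hE (hA_nbc S hS2)
    have hbase : M.IsBase (S : Set (Fin (n + 1))) := hsp.isBase_of_indep hSind
    have hcard : S.card = r + 1 := by
      rw [← Set.ncard_coe_finset]
      exact hrank _ hbase
    rw [hcard]
  -- identify the two filters
  have hfilter : Finset.univ.filter (fun S : Finset (Fin (n + 1)) =>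
        (∀ B, M.IsBrokenCircuit B → ¬ B ⊆ (S : Set (Fin (n + 1)))) ∧
        ∀ T : Finset (Fin (n + 1)),
          (∀ B, M.IsBrokenCircuit B → ¬ B ⊆ (T : Set (Fin (n + 1)))) → S ⊆ T → S = T)
      = (Finset.univ.filter (fun S : Finset (Fin (n + 1)) =>
          M.Spanning (S : Set (Fin (n + 1))))).filter (fun S => Aset M S = ∅) := by
    rw [Finset.filter_filter]
    exact Finset.filter_congr fun S _ => hequiv S
  -- assemble
  rw [hfilter, heval,
    ← Finset.sum_filter_add_sum_filter_not (Finset.univ.filter (fun S : Finset (Fin (n + 1)) =>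
      M.Spanning (S : Set (Fin (n + 1))))) (fun S => Aset M S = ∅), hzero, add_zero, hfix]
  have h1 : ((-1 : ℚ)) ^ (r + 1) * (-1) ^ (r + 1) = 1 := by
    rw [← mul_pow]
    norm_num
  rw [mul_comm (((-1 : ℚ)) ^ (r + 1)), mul_assoc, h1, mul_one]
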